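/- Let χ = Σ_{i≠j} a_{i,j} χ_{i,j} be a generic character of PΣ_3 (no nontrivial {-1,0,1}-linear dependence among the a_{i,j}). Then the ascending subgraph I_3^↑(χ) of I_3 — the full subgraph on ascending symmetric ideal edges — has exactly nine vertices (six depots and three hubs), each ascending hub has degree at least three in I_3^↑(χ), hence I_3^↑(χ) has at least nine edges and therefore contains a nontrivial cycle (is not a forest), and moreover I_3^↑(χ) is connected. -/

import Mathlib

/-- `A` splits the pair `{i, ī}`. -/
def Splits (A : Finset (Fin 3 × Bool)) (i : Fin 3) : Prop :=
  Xor' ((i, false) ∈ A) ((i, true) ∈ A)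

/-- Symmetric ideal edge on `E = {1,1̄,2,2̄,3,3̄}`. -/
def IsSIE (A : Finset (Fin 3 × Bool)) : Prop :=
  2 ≤ A.card ∧ A ≠ Finset.univ ∧ ∃! i : Fin 3, Splits A i

/-- Compatibility of ideal edges. -/
def Compat (A B : Finset (Fin 3 × Bool)) : Prop :=
  A ⊆ B ∨ B ⊆ A ∨ Disjoint A B

/-- The character `χ = Σ_{i≠j} a_{i,j} χ_{i,j}` is generic: no nontrivial
`{-1,0,1}`-linear dependence among the `a_{i,j}` (`i ≠ j`). -/
def Generic (a : Fin 3 → Fin 3 → ℝ) : Prop :=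
  ∀ ε : Fin 3 → Fin 3 → ℤ, (∀ i j, ε i j = -1 ∨ ε i j = 0 ∨ ε i j = 1) →
    (∑ i : Fin 3, ∑ j ∈ Finset.univ \ {i}, (ε i j : ℝ) * a i j) = 0 →
    ∀ i j, i ≠ j → ε i j = 0

/-- A symmetric ideal edge `A` with split pair `{j, j̄}` and
`I = {i ≠ j : {i, ī} ⊆ A}` is ascending for `χ` if `j ∈ A` and `Σ_{i∈I} a_{i,j} > 0`,
or `j̄ ∈ A` and `Σ_{i∈I} a_{i,j} < 0`. -/
def IsAscFor (a : Fin 3 → Fin 3 → ℝ) (A : Finset (Fin 3 × Bool)) : Prop :=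
  IsSIE A ∧ ∃ j : Fin 3, Splits A j ∧
    (((j, false) ∈ A ∧
        0 < ∑ i ∈ Finset.univ.filter (fun i : Fin 3 => i ≠ j ∧ (i, false) ∈ A), a i j) ∨
      ((j, true) ∈ A ∧
        (∑ i ∈ Finset.univ.filter (fun i : Fin 3 => i ≠ j ∧ (i, false) ∈ A), a i j) < 0))

/-- The ascending subgraph `I_3^↑(χ)`: the full subgraph of `I_3` on the ascending
symmetric ideal edges, with adjacency given by compatibility. -/
def AscGraph (a : Fin 3 → Fin 3 → ℝ) :
    SimpleGraph {A : Finset (Fin 3 × Bool) // IsAscFor a A} where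
  Adj A B := A ≠ B ∧ Compat A.1 B.1
  symm := by
    constructor
    intro A B hAB
    refine ⟨hAB.1.symm, ?_⟩
    rcases hAB.2 with h | h | h
    · exact Or.inr (Or.inl h)
    · exact Or.inl h
    · exact Or.inr (Or.inr h.symm)
  loopless := ⟨fun A hA => hA.1 rfl⟩

namespace Stmt18Aux


def depot (i j : Fin 3) (b : Bool) : Finset (Fin 3 × Bool) := {(i,false),(i,true),(j,b)}
def hub (j : Fin 3) (b : Bool) : Finset (Fin 3 × Bool) := Finset.univ \ {(j,!b)}
def o1 (j : Fin 3) : Fin 3 := if j = 0 then 1 else 0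
def o2 (j : Fin 3) : Fin 3 := if j = 2 then 1 else 2

instance (A : Finset (Fin 3 × Bool)) (i : Fin 3) : Decidable (Splits A i) := by
  unfold Splits Xor'; infer_instance
instance (A : Finset (Fin 3 × Bool)) : Decidable (IsSIE A) := by
  unfold IsSIE ExistsUnique; infer_instance


lemma filter_depot : ∀ (i j : Fin 3) b, i ≠ j →
    Finset.univ.filter (fun i' : Fin 3 => i' ≠ j ∧ (i', false) ∈ depot i j b) = {i} := by decide
lemma filter_hub : ∀ (j : Fin 3) b,
    Finset.univ.filter (fun i : Fin 3 => i ≠ j ∧ (i, false) ∈ hub j b) = {o1 j, o2 j} := by decide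
lemma splits_depot : ∀ (i j : Fin 3) b (k : Fin 3), i ≠ j → (Splits (depot i j b) k ↔ k = j) := by
  decide
lemma splits_hub : ∀ (j : Fin 3) b (k : Fin 3), Splits (hub j b) k ↔ k = j := by decide
lemma mem_depot_false : ∀ (i j : Fin 3) b, i ≠ j → (((j, false) ∈ depot i j b) ↔ b = false) := by
  decide
lemma mem_depot_true : ∀ (i j : Fin 3) b, i ≠ j → (((j, true) ∈ depot i j b) ↔ b = true) := by
  decide
lemma mem_hub_false : ∀ (j : Fin 3) b, ((j, false) ∈ hub j b) ↔ b = false := by decide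
lemma mem_hub_true : ∀ (j : Fin 3) b, ((j, true) ∈ hub j b) ↔ b = true := by decide
lemma o1_ne : ∀ j : Fin 3, o1 j ≠ j := by decide
lemma o1_ne_o2 : ∀ j : Fin 3, o1 j ≠ o2 j := by decide
lemma is_sie_depot : ∀ (i j : Fin 3) b, i ≠ j → IsSIE (depot i j b) := by decide
lemma is_sie_hub : ∀ (j : Fin 3) b, IsSIE (hub j b) := by decide
lemma classifySIE : ∀ A : Finset (Fin 3 × Bool), IsSIE A ↔
    ((∃ i j b, i ≠ j ∧ A = depot i j b) ∨ ∃ j b, A = hub j b) := by decide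

lemma expand (f : Fin 3 → Fin 3 → ℝ) :
    (∑ i : Fin 3, ∑ j ∈ Finset.univ \ {i}, f i j)
      = f 0 1 + f 0 2 + (f 1 0 + f 1 2) + (f 2 0 + f 2 1) := by
  have h0 : (Finset.univ \ {(0 : Fin 3)}) = ({1, 2} : Finset (Fin 3)) := by decide
  have h1 : (Finset.univ \ {(1 : Fin 3)}) = ({0, 2} : Finset (Fin 3)) := by decide
  have h2 : (Finset.univ \ {(2 : Fin 3)}) = ({0, 1} : Finset (Fin 3)) := by decide
  rw [Fin.sum_univ_three, h0, h1, h2, Finset.sum_pair (by decide), Finset.sum_pair (by decide),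
    Finset.sum_pair (by decide)]

variable {a : Fin 3 → Fin 3 → ℝ}

lemma gen_ne0 (hgen : Generic a) : ∀ i j : Fin 3, i ≠ j → a i j ≠ 0 := by
  intro i j hij h
  have key : (∑ p : Fin 3, ∑ q ∈ Finset.univ \ {p},
      ((if p = i ∧ q = j then (1 : ℤ) else 0 : ℤ) : ℝ) * a p q) = a i j := by
    rw [expand]
    fin_cases i <;> fin_cases j <;> simp_all
  have := hgen (fun p q => if p = i ∧ q = j then 1 else 0)
    (fun p q => by by_cases h' : p = i ∧ q = j <;> simp [h'])
    (key.trans h) i j hij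
  simp at this

lemma gen_sum_ne0 (hgen : Generic a) : ∀ j : Fin 3, a (o1 j) j + a (o2 j) j ≠ 0 := by
  intro j h
  have key : (∑ p : Fin 3, ∑ q ∈ Finset.univ \ {p},
      ((if q = j ∧ p ≠ j then (1 : ℤ) else 0 : ℤ) : ℝ) * a p q)
      = a (o1 j) j + a (o2 j) j := by
    rw [expand]
    fin_cases j <;> simp [o1, o2]
  have := hgen (fun p q => if q = j ∧ p ≠ j then 1 else 0)
    (fun p q => by by_cases h' : q = j ∧ p ≠ j <;> simp [h'])
    (key.trans h) (o1 j) j (o1_ne j)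
  simp [o1_ne j] at this

noncomputable def db (a : Fin 3 → Fin 3 → ℝ) (i j : Fin 3) : Bool :=
  if 0 < a i j then false else true
noncomputable def hb (a : Fin 3 → Fin 3 → ℝ) (j : Fin 3) : Bool :=
  if 0 < a (o1 j) j + a (o2 j) j then false else true

lemma asc_depot_iff {i j : Fin 3} {b : Bool} (hij : i ≠ j) (h0 : a i j ≠ 0) :
    IsAscFor a (depot i j b) ↔ b = db a i j := by
  have hsum : (∑ i' ∈ Finset.univ.filter
      (fun i' : Fin 3 => i' ≠ j ∧ (i', false) ∈ depot i j b), a i' j) = a i j := by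
    rw [filter_depot i j b hij, Finset.sum_singleton]
  constructor
  · rintro ⟨-, j', hs, h⟩
    have hj' : j' = j := (splits_depot i j b j' hij).mp hs
    obtain rfl : j = j' := hj'.symm
    rw [hsum] at h
    rcases h with ⟨hm, hpos⟩ | ⟨hm, hneg⟩
    · rw [(mem_depot_false i j b hij).mp hm]; simp [db, hpos]
    · rw [(mem_depot_true i j b hij).mp hm]; simp [db, not_lt.mpr hneg.le]
  · intro hbeq
    refine ⟨is_sie_depot i j b hij, j, (splits_depot i j b j hij).mpr rfl, ?_⟩
    rw [hsum]
    rcases h0.lt_or_gt with hneg | hpos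
    · right
      have : db a i j = true := by simp [db, not_lt.mpr hneg.le]
      exact ⟨(mem_depot_true i j b hij).mpr (hbeq.trans this), hneg⟩
    · left
      have : db a i j = false := by simp [db, hpos]
      exact ⟨(mem_depot_false i j b hij).mpr (hbeq.trans this), hpos⟩

lemma asc_hub_iff {j : Fin 3} {b : Bool} (h0 : a (o1 j) j + a (o2 j) j ≠ 0) :
    IsAscFor a (hub j b) ↔ b = hb a j := by
  have hsum : (∑ i ∈ Finset.univ.filter
      (fun i : Fin 3 => i ≠ j ∧ (i, false) ∈ hub j b), a i j)
      = a (o1 j) j + a (o2 j) j := by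
    rw [filter_hub j b, Finset.sum_pair (o1_ne_o2 j)]
  constructor
  · rintro ⟨-, j', hs, h⟩
    have hj' : j' = j := (splits_hub j b j').mp hs
    obtain rfl : j = j' := hj'.symm
    rw [hsum] at h
    rcases h with ⟨hm, hpos⟩ | ⟨hm, hneg⟩
    · rw [(mem_hub_false j b).mp hm]; simp [hb, hpos]
    · rw [(mem_hub_true j b).mp hm]; simp [hb, not_lt.mpr hneg.le]
  · intro hbeq
    refine ⟨is_sie_hub j b, j, (splits_hub j b j).mpr rfl, ?_⟩
    rw [hsum]
    rcases h0.lt_or_gt with hneg | hpos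
    · right
      have : hb a j = true := by simp [hb, not_lt.mpr hneg.le]
      exact ⟨(mem_hub_true j b).mpr (hbeq.trans this), hneg⟩
    · left
      have : hb a j = false := by simp [hb, hpos]
      exact ⟨(mem_hub_false j b).mpr (hbeq.trans this), hpos⟩

lemma classify (hne0 : ∀ i j : Fin 3, i ≠ j → a i j ≠ 0)
    (hS : ∀ j : Fin 3, a (o1 j) j + a (o2 j) j ≠ 0) (A : Finset (Fin 3 × Bool)) :
    IsAscFor a A ↔
      ((∃ i j, ∃ _ : i ≠ j, A = depot i j (db a i j)) ∨ ∃ j, A = hub j (hb a j)) := by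
  constructor
  · intro hA
    rcases (classifySIE A).mp hA.1 with ⟨i, j, b, hij, rfl⟩ | ⟨j, b, rfl⟩
    · left
      exact ⟨i, j, hij, by rw [(asc_depot_iff hij (hne0 i j hij)).mp hA]⟩
    · right
      exact ⟨j, by rw [(asc_hub_iff (hS j)).mp hA]⟩
  · rintro (⟨i, j, hij, rfl⟩ | ⟨j, rfl⟩)
    · exact (asc_depot_iff hij (hne0 i j hij)).mpr rfl
    · exact (asc_hub_iff (hS j)).mpr rfl


def thd (i j : Fin 3) : Fin 3 := if i ≠ 0 ∧ j ≠ 0 then 0 else if i ≠ 1 ∧ j ≠ 1 then 1 else 2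
lemma depot_card : ∀ (i j : Fin 3) b, i ≠ j → (depot i j b).card = 3 := by decide
lemma hub_card : ∀ (j : Fin 3) b, (hub j b).card = 5 := by decide
lemma depot_ne_hub : ∀ (i j : Fin 3) b (k : Fin 3) c, i ≠ j → depot i j b ≠ hub k c := by decide
lemma depot_inj : ∀ (i j : Fin 3) b (i' j' : Fin 3) b', i ≠ j → i' ≠ j' →
    depot i j b = depot i' j' b' → i = i' ∧ j = j' ∧ b = b' := by decide
lemma hub_inj : ∀ (j : Fin 3) b (j' : Fin 3) b', hub j b = hub j' b' → j = j' ∧ b = b' := by decide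
lemma o2_ne : ∀ j : Fin 3, o2 j ≠ j := by decide
lemma thd_ne : ∀ i j : Fin 3, i ≠ j → thd i j ≠ i ∧ thd i j ≠ j := by decide
lemma depot_subset_hub : ∀ (p q : Fin 3) b (r : Fin 3) c, p ≠ r → q ≠ r →
    depot p q b ⊆ hub r c := by decide
lemma depot_subset_hub' : ∀ (p r : Fin 3) c, p ≠ r → depot p r c ⊆ hub r c := by decide
lemma fin3_pigeon : ∀ j j' k k' : Fin 3, j ≠ j' → k ≠ j → k ≠ j' → k' ≠ j → k' ≠ j' →
    k = k' := by decide

section Main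

variable {a : Fin 3 → Fin 3 → ℝ}

noncomputable def vdep (a : Fin 3 → Fin 3 → ℝ)
    (hne0 : ∀ i j : Fin 3, i ≠ j → a i j ≠ 0) (i j : Fin 3) (h : i ≠ j) :
    {A : Finset (Fin 3 × Bool) // IsAscFor a A} :=
  ⟨depot i j (db a i j), (asc_depot_iff h (hne0 i j h)).mpr rfl⟩

noncomputable def vhub (a : Fin 3 → Fin 3 → ℝ)
    (hS : ∀ j : Fin 3, a (o1 j) j + a (o2 j) j ≠ 0) (j : Fin 3) :
    {A : Finset (Fin 3 × Bool) // IsAscFor a A} :=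
  ⟨hub j (hb a j), (asc_hub_iff (hS j)).mpr rfl⟩

variable (hne0 : ∀ i j : Fin 3, i ≠ j → a i j ≠ 0)
  (hS : ∀ j : Fin 3, a (o1 j) j + a (o2 j) j ≠ 0)

lemma adj1 (p q : Fin 3) (h : p ≠ q) (j : Fin 3) (hp : p ≠ j) (hq : q ≠ j) :
    (AscGraph a).Adj (vhub a hS j) (vdep a hne0 p q h) := by
  refine ⟨fun He => depot_ne_hub p q _ j _ h (congrArg Subtype.val He).symm, ?_⟩
  exact Or.inr (Or.inl (depot_subset_hub p q _ j _ hp hq))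

lemma adj_hub_split (p j : Fin 3) (h : p ≠ j) (hsgn : db a p j = hb a j) :
    (AscGraph a).Adj (vhub a hS j) (vdep a hne0 p j h) := by
  refine ⟨fun He => depot_ne_hub p j _ j _ h (congrArg Subtype.val He).symm, ?_⟩
  refine Or.inr (Or.inl ?_)
  show depot p j (db a p j) ⊆ hub j (hb a j)
  rw [hsgn]
  exact depot_subset_hub' p j (hb a j) h

lemma exists_r (hS : ∀ j : Fin 3, a (o1 j) j + a (o2 j) j ≠ 0) (j : Fin 3) :
    ∃ p, (p = o1 j ∨ p = o2 j) ∧ db a p j = hb a j := by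
  by_cases hpos : 0 < a (o1 j) j + a (o2 j) j
  · have hhb : hb a j = false := by simp [hb, hpos]
    by_cases h1 : 0 < a (o1 j) j
    · exact ⟨o1 j, Or.inl rfl, by simp [db, h1, hhb]⟩
    · have h2 : 0 < a (o2 j) j := by push_neg at h1; linarith
      exact ⟨o2 j, Or.inr rfl, by simp [db, h2, hhb]⟩
  · have hneg : a (o1 j) j + a (o2 j) j < 0 := ((hS j).lt_or_gt).resolve_right hpos
    have hhb : hb a j = true := by simp [hb, hpos]
    by_cases h1 : a (o1 j) j < 0
    · exact ⟨o1 j, Or.inl rfl, by simp [db, not_lt.mpr h1.le, hhb]⟩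
    · have h2 : a (o2 j) j < 0 := by push_neg at h1; linarith
      exact ⟨o2 j, Or.inr rfl, by simp [db, not_lt.mpr h2.le, hhb]⟩

end Main
end Stmt18Aux

/- For a generic character `χ` of `PΣ_3`, the ascending graph `I_3^↑(χ)` has exactly
nine vertices (six depots, of size 3, and three hubs, of size 5), each ascending hub has
degree at least three, the graph has at least nine edges (i.e. at least eighteen ordered
adjacent pairs), hence contains a nontrivial cycle (is not acyclic), and moreover it is
connected. -/
open Stmt18Aux in
/-- For a generic character `χ` of `PΣ_3`, the ascending graph `I_3^↑(χ)` has exactly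
nine vertices (six depots, of size 3, and three hubs, of size 5), each ascending hub has
degree at least three, the graph has at least nine edges (i.e. at least eighteen ordered
adjacent pairs), hence contains a nontrivial cycle (is not acyclic), and moreover it is
connected. -/
theorem stmt18 (a : Fin 3 → Fin 3 → ℝ) (hgen : Generic a) :
    Nat.card {A : Finset (Fin 3 × Bool) // IsAscFor a A} = 9 ∧
    Nat.card {A : Finset (Fin 3 × Bool) // IsAscFor a A ∧ A.card = 3} = 6 ∧
    Nat.card {A : Finset (Fin 3 × Bool) // IsAscFor a A ∧ A.card = 5} = 3 ∧
    (∀ H : {A : Finset (Fin 3 × Bool) // IsAscFor a A}, H.1.card = 5 →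
      3 ≤ Nat.card {B : {A : Finset (Fin 3 × Bool) // IsAscFor a A} //
        (AscGraph a).Adj H B}) ∧
    18 ≤ Nat.card {p : {A : Finset (Fin 3 × Bool) // IsAscFor a A} ×
        {A : Finset (Fin 3 × Bool) // IsAscFor a A} // (AscGraph a).Adj p.1 p.2} ∧
    ¬ (AscGraph a).IsAcyclic ∧
    (AscGraph a).Connected := by
  classical
  have hne0 := gen_ne0 hgen
  have hS := gen_sum_ne0 hgen
  -- ## vertex count
  set V := {A : Finset (Fin 3 × Bool) // IsAscFor a A} with hV
  have hsurj : ∀ u : V, (∃ i j, ∃ h : i ≠ j, u = vdep a hne0 i j h) ∨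
      ∃ j, u = vhub a hS j := by
    intro u
    rcases (classify hne0 hS u.1).mp u.2 with ⟨i, j, hij, hA⟩ | ⟨j, hA⟩
    · exact Or.inl ⟨i, j, hij, Subtype.ext hA⟩
    · exact Or.inr ⟨j, Subtype.ext hA⟩
  have hdd : ∀ (i j : Fin 3) (h : i ≠ j) (i' j' : Fin 3) (h' : i' ≠ j'),
      vdep a hne0 i j h = vdep a hne0 i' j' h' → i = i' ∧ j = j' := by
    intro i j h i' j' h' He
    have := depot_inj i j _ i' j' _ h h' (congrArg Subtype.val He)
    exact ⟨this.1, this.2.1⟩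
  have hdh : ∀ (i j : Fin 3) (h : i ≠ j) (j' : Fin 3),
      vdep a hne0 i j h ≠ vhub a hS j' := by
    intro i j h j' He
    exact depot_ne_hub i j _ j' _ h (congrArg Subtype.val He)
  have hhh : ∀ j j' : Fin 3, vhub a hS j = vhub a hS j' → j = j' := by
    intro j j' He
    exact (hub_inj j _ j' _ (congrArg Subtype.val He)).1
  have h9 : Nat.card V = 9 := by
    let f : ({p : Fin 3 × Fin 3 // p.1 ≠ p.2} ⊕ Fin 3) → V :=
      Sum.elim (fun p => vdep a hne0 p.1.1 p.1.2 p.2) (fun j => vhub a hS j)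
    have hfb : Function.Bijective f := by
      constructor
      · rintro (⟨⟨i, j⟩, hij⟩ | j) (⟨⟨i', j'⟩, hij'⟩ | j') He
        · obtain ⟨h1, h2⟩ := hdd i j hij i' j' hij' He
          subst h1; subst h2; rfl
        · exact absurd He (hdh i j hij j')
        · exact absurd He.symm (hdh i' j' hij' j)
        · rw [hhh j j' He]
      · intro u
        rcases hsurj u with ⟨i, j, h, rfl⟩ | ⟨j, rfl⟩
        · exact ⟨Sum.inl ⟨(i, j), h⟩, rfl⟩
        · exact ⟨Sum.inr j, rfl⟩
    rw [Nat.card_congr (Equiv.ofBijective f hfb).symm, Nat.card_eq_fintype_card]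
    decide
  -- ## depots count
  have h6 : Nat.card {A : Finset (Fin 3 × Bool) // IsAscFor a A ∧ A.card = 3} = 6 := by
    let f : {p : Fin 3 × Fin 3 // p.1 ≠ p.2} →
        {A : Finset (Fin 3 × Bool) // IsAscFor a A ∧ A.card = 3} :=
      fun p => ⟨depot p.1.1 p.1.2 (db a p.1.1 p.1.2),
        (asc_depot_iff p.2 (hne0 _ _ p.2)).mpr rfl, depot_card _ _ _ p.2⟩
    have hfb : Function.Bijective f := by
      constructor
      · rintro ⟨⟨i, j⟩, hij⟩ ⟨⟨i', j'⟩, hij'⟩ He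
        have := depot_inj i j _ i' j' _ hij hij' (congrArg Subtype.val He)
        simp only [Subtype.mk.injEq, Prod.mk.injEq]
        exact ⟨this.1, this.2.1⟩
      · rintro ⟨A, hA, hc⟩
        rcases (classify hne0 hS A).mp hA with ⟨i, j, hij, rfl⟩ | ⟨j, rfl⟩
        · exact ⟨⟨(i, j), hij⟩, rfl⟩
        · rw [hub_card] at hc; exact absurd hc (by norm_num)
    rw [Nat.card_congr (Equiv.ofBijective f hfb).symm, Nat.card_eq_fintype_card]
    decide
  -- ## hubs count
  have h3c : Nat.card {A : Finset (Fin 3 × Bool) // IsAscFor a A ∧ A.card = 5} = 3 := by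
    let f : Fin 3 → {A : Finset (Fin 3 × Bool) // IsAscFor a A ∧ A.card = 5} :=
      fun j => ⟨hub j (hb a j), (asc_hub_iff (hS j)).mpr rfl, hub_card _ _⟩
    have hfb : Function.Bijective f := by
      constructor
      · intro j j' He
        exact (hub_inj j _ j' _ (congrArg Subtype.val He)).1
      · rintro ⟨A, hA, hc⟩
        rcases (classify hne0 hS A).mp hA with ⟨i, j, hij, rfl⟩ | ⟨j, rfl⟩
        · rw [depot_card i j _ hij] at hc; exact absurd hc (by norm_num)
        · exact ⟨j, rfl⟩
    rw [Nat.card_congr (Equiv.ofBijective f hfb).symm, Nat.card_eq_fintype_card]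
    decide
  -- ## choice of matching depot for each hub
  choose r hr1 hr2 using fun j => exists_r hS j
  have hrne : ∀ j, r j ≠ j := by
    intro j
    rcases hr1 j with h | h <;> rw [h]
    exacts [o1_ne j, o2_ne j]
  -- ## the three distinguished neighbours of each hub
  let N : Fin 3 → Fin 3 → V := fun j =>
    ![vdep a hne0 (o1 j) (o2 j) (o1_ne_o2 j),
      vdep a hne0 (o2 j) (o1 j) (o1_ne_o2 j).symm,
      vdep a hne0 (r j) j (hrne j)]
  have adjN : ∀ j t, (AscGraph a).Adj (vhub a hS j) (N j t) := by
    intro j t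
    fin_cases t
    · exact adj1 hne0 hS (o1 j) (o2 j) (o1_ne_o2 j) j (o1_ne j) (o2_ne j)
    · exact adj1 hne0 hS (o2 j) (o1 j) (o1_ne_o2 j).symm j (o2_ne j) (o1_ne j)
    · exact adj_hub_split hne0 hS (r j) j (hrne j) (hr2 j)
  have key : ∀ (x y x' y' : Fin 3) (b b' : Bool), x ≠ y → x' ≠ y' → y ≠ y' →
      depot x y b ≠ depot x' y' b' := by
    intro x y x' y' b b' h1 h2 h3 he
    exact h3 (depot_inj x y b x' y' b' h1 h2 he).2.1
  have Ninj : ∀ j t t', N j t = N j t' → t = t' := by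
    intro j t t' h
    have hval := congrArg Subtype.val h
    fin_cases t <;> fin_cases t'
    · rfl
    · exact absurd hval (key _ _ _ _ _ _ (o1_ne_o2 j) (o1_ne_o2 j).symm (o1_ne_o2 j).symm)
    · exact absurd hval (key _ _ _ _ _ _ (o1_ne_o2 j) (hrne j) (o2_ne j))
    · exact absurd hval (key _ _ _ _ _ _ (o1_ne_o2 j).symm (o1_ne_o2 j) (o1_ne_o2 j))
    · rfl
    · exact absurd hval (key _ _ _ _ _ _ (o1_ne_o2 j).symm (hrne j) (o1_ne j))
    · exact absurd hval (key _ _ _ _ _ _ (hrne j) (o1_ne_o2 j) (o2_ne j).symm)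
    · exact absurd hval (key _ _ _ _ _ _ (hrne j) (o1_ne_o2 j).symm (o1_ne j).symm)
    · rfl
  -- ## hub degrees
  have hdeg : ∀ H : V, H.1.card = 5 →
      3 ≤ Nat.card {B : V // (AscGraph a).Adj H B} := by
    intro H hc
    obtain ⟨j, rfl⟩ : ∃ j, H = vhub a hS j := by
      rcases hsurj H with ⟨i, j, h, rfl⟩ | hj
      · exfalso
        have h3 : (depot i j (db a i j)).card = 3 := depot_card i j _ h
        have : (vdep a hne0 i j h).1.card = 3 := h3
        rw [hc] at this
        exact absurd this (by norm_num)
      · exact hj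
    let F : Fin 3 → {B : V // (AscGraph a).Adj (vhub a hS j) B} :=
      fun t => ⟨N j t, adjN j t⟩
    have hFinj : Function.Injective F :=
      fun t t' h => Ninj j t t' (congrArg Subtype.val h)
    calc (3 : ℕ) = Nat.card (Fin 3) := by simp
      _ ≤ _ := Nat.card_le_card_of_injective F hFinj
  -- ## edge count
  have hubN : ∀ j j' t', vhub a hS j ≠ N j' t' := by
    intro j j' t'
    fin_cases t'
    · exact (hdh (o1 j') (o2 j') (o1_ne_o2 j') j).symm
    · exact (hdh (o2 j') (o1 j') (o1_ne_o2 j').symm j).symm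
    · exact (hdh (r j') j' (hrne j') j).symm
  have h18 : 18 ≤ Nat.card {p : V × V // (AscGraph a).Adj p.1 p.2} := by
    let G2 : Fin 3 × Fin 3 × Bool → {p : V × V // (AscGraph a).Adj p.1 p.2} := fun x =>
      if x.2.2 = true then ⟨(N x.1 x.2.1, vhub a hS x.1), (adjN x.1 x.2.1).symm⟩
      else ⟨(vhub a hS x.1, N x.1 x.2.1), adjN x.1 x.2.1⟩
    have hG2 : Function.Injective G2 := by
      rintro ⟨j, t, s⟩ ⟨j', t', s'⟩ h
      cases s <;> cases s' <;> have hp := congrArg Subtype.val h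
      · have h1 : vhub a hS j = vhub a hS j' := congrArg Prod.fst hp
        obtain rfl : j = j' := hhh j j' h1
        have h2 : N j t = N j t' := congrArg Prod.snd hp
        rw [Ninj j t t' h2]
      · exact absurd (congrArg Prod.fst hp) (hubN j j' t')
      · exact absurd (congrArg Prod.fst hp).symm (hubN j' j t)
      · have h1 : vhub a hS j = vhub a hS j' := congrArg Prod.snd hp
        obtain rfl : j = j' := hhh j j' h1
        have h2 : N j t = N j t' := congrArg Prod.fst hp
        rw [Ninj j t t' h2]
    calc (18 : ℕ) = Nat.card (Fin 3 × Fin 3 × Bool) := by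
          simp [Nat.card_eq_fintype_card]
      _ ≤ _ := Nat.card_le_card_of_injective G2 hG2
  -- ## connectivity
  have adjDH : ∀ (p q : Fin 3) (h : p ≠ q),
      (AscGraph a).Adj (vdep a hne0 p q h) (vhub a hS (thd p q)) := by
    intro p q h
    exact (adj1 hne0 hS p q h (thd p q) (Ne.symm (thd_ne p q h).1)
      (fun hq => (thd_ne p q h).2 hq.symm)).symm
  have hN2 : ∀ j, N j 2 = vdep a hne0 (r j) j (hrne j) := fun j => rfl
  have step : ∀ j, (AscGraph a).Reachable (vhub a hS j) (vhub a hS (thd (r j) j)) := by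
    intro j
    refine (adjN j 2).reachable.trans ?_
    rw [hN2 j]
    exact (adjDH (r j) j (hrne j)).reachable
  have hubReach : ∀ j j', (AscGraph a).Reachable (vhub a hS j) (vhub a hS j') := by
    intro j j'
    by_cases hjj : j = j'
    · subst hjj; rfl
    · by_cases hk : thd (r j) j = j'
      · rw [← hk]; exact step j
      · by_cases hk' : thd (r j') j' = j
        · exact (hk' ▸ step j').symm
        · have hkk : thd (r j) j = thd (r j') j' :=
            fin3_pigeon j j' _ _ hjj (thd_ne (r j) j (hrne j)).2 hk hk'
              (thd_ne (r j') j' (hrne j')).2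
          exact (step j).trans (hkk ▸ (step j').symm)
  have toHub : ∀ u : V, ∃ j, (AscGraph a).Reachable u (vhub a hS j) := by
    intro u
    rcases hsurj u with ⟨i, j, h, rfl⟩ | ⟨j, rfl⟩
    · exact ⟨thd i j, (adjDH i j h).reachable⟩
    · exact ⟨j, by rfl⟩
  have hconn : (AscGraph a).Connected := by
    rw [SimpleGraph.connected_iff]
    refine ⟨fun u v => ?_, ⟨vhub a hS 0⟩⟩
    obtain ⟨j, hj⟩ := toHub u
    obtain ⟨j', hj'⟩ := toHub v
    exact (hj.trans (hubReach j j')).trans hj'.symm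
  -- ## not acyclic
  have hnacyc : ¬ (AscGraph a).IsAcyclic := by
    intro hacyc
    haveI : Fintype V := Fintype.ofFinite _
    haveI : DecidableRel (AscGraph a).Adj := Classical.decRel _
    have htree : (AscGraph a).IsTree := ⟨hconn, hacyc⟩
    have hE := htree.card_edgeFinset
    have hcV : Fintype.card V = 9 := by rw [← Nat.card_eq_fintype_card]; exact h9
    have hdart : Fintype.card (AscGraph a).Dart = 2 * (AscGraph a).edgeFinset.card :=
      SimpleGraph.dart_card_eq_twice_card_edges (G := AscGraph a)
    have hequiv : {p : V × V // (AscGraph a).Adj p.1 p.2} ≃ (AscGraph a).Dart :=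
      { toFun := fun p => ⟨p.1, p.2⟩
        invFun := fun d => ⟨d.toProd, d.adj⟩
        left_inv := fun p => rfl
        right_inv := fun d => rfl }
    have hcd : Nat.card {p : V × V // (AscGraph a).Adj p.1 p.2}
        = Fintype.card (AscGraph a).Dart := by
      rw [Nat.card_congr hequiv, Nat.card_eq_fintype_card]
    rw [hcV] at hE
    have hcE : (AscGraph a).edgeFinset.card = 8 := by omega
    rw [hcd, hdart, hcE] at h18
    norm_num at h18
  exact ⟨h9, h6, h3c, hdeg, h18, hnacyc, hconn⟩
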